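/- The dual function d(λ) = β ∑_z ρ(z) log Q(z,λ) + λ C + (β/2) λ² is twice differentiable on ℝ, and for every λ ∈ ℝ its second derivative equals d″(λ) = β + (1/β) ∑_z ρ(z) w2(z)² · Var_{π_λ(·|z)}(c(z,·)), where Var_p(g) = ∑_{a∈{0,1}} p(a) g(a)² − ( ∑_{a∈{0,1}} p(a) g(a) )². -/

import Mathlib

open Finset

/-- `q_λ(z,a) = w1(z) r(z,a) − λ w2(z) c(z,a)`. -/
noncomputable def qfun {Z : Type*} (r c : Z → Bool → ℝ) (w1 w2 : Z → ℝ)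
    (lam : ℝ) (z : Z) (a : Bool) : ℝ :=
  w1 z * r z a - lam * (w2 z * c z a)

/-- Partition function `Q(z,λ) = ∑_a exp(q_λ(z,a)/β)`. -/
noncomputable def Qpart {Z : Type*} (r c : Z → Bool → ℝ) (w1 w2 : Z → ℝ)
    (β lam : ℝ) (z : Z) : ℝ :=
  ∑ a, Real.exp (qfun r c w1 w2 lam z a / β)

/-- Gibbs policy `π_λ(a|z) = exp(q_λ(z,a)/β) / Q(z,λ)`. -/
noncomputable def gibbs {Z : Type*} (r c : Z → Bool → ℝ) (w1 w2 : Z → ℝ)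
    (β lam : ℝ) (z : Z) (a : Bool) : ℝ :=
  Real.exp (qfun r c w1 w2 lam z a / β) / Qpart r c w1 w2 β lam z

/-- The dual function `d(λ) = β ∑_z ρ(z) log Q(z,λ) + λ C + (β/2) λ²`. -/
noncomputable def dualFun {Z : Type*} [Fintype Z] (ρ : Z → ℝ)
    (r c : Z → Bool → ℝ) (w1 w2 : Z → ℝ) (β C lam : ℝ) : ℝ :=
  β * ∑ z, ρ z * Real.log (Qpart r c w1 w2 β lam z) + lam * C + β * lam ^ 2 / 2

/-- Variance of `g` under a pmf `p` on `{0,1}`: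
`Var_p(g) = ∑_a p(a) g(a)² − (∑_a p(a) g(a))²`. -/
noncomputable def varBool (p g : Bool → ℝ) : ℝ :=
  (∑ a, p a * g a ^ 2) - (∑ a, p a * g a) ^ 2

/- auxiliary -/
noncomputable def Qd {Z : Type*} (r c : Z → Bool → ℝ) (w1 w2 : Z → ℝ)
    (β lam : ℝ) (z : Z) : ℝ :=
  ∑ a, -(w2 z * c z a) / β * Real.exp (qfun r c w1 w2 lam z a / β)

noncomputable def Qdd {Z : Type*} (r c : Z → Bool → ℝ) (w1 w2 : Z → ℝ)
    (β lam : ℝ) (z : Z) : ℝ :=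
  ∑ a, (w2 z * c z a) / β * ((w2 z * c z a) / β * Real.exp (qfun r c w1 w2 lam z a / β))

lemma Qpart_pos {Z : Type*} (r c : Z → Bool → ℝ) (w1 w2 : Z → ℝ)
    (β lam : ℝ) (z : Z) : 0 < Qpart r c w1 w2 β lam z :=
  Finset.sum_pos (fun a _ => Real.exp_pos _) ⟨true, mem_univ _⟩

lemma hasDerivAt_expterm (A B β lam : ℝ) :
    HasDerivAt (fun l => Real.exp ((A - l * B) / β))
      (-B / β * Real.exp ((A - lam * B) / β)) lam := by
  have h : HasDerivAt (fun l : ℝ => (A - l * B) / β) (-B / β) lam := by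
    simpa using (((hasDerivAt_id lam).mul_const B).const_sub A).div_const β
  simpa [mul_comm] using h.exp

lemma hasDerivAt_Qpart {Z : Type*} (r c : Z → Bool → ℝ) (w1 w2 : Z → ℝ)
    (β lam : ℝ) (z : Z) :
    HasDerivAt (fun l => Qpart r c w1 w2 β l z) (Qd r c w1 w2 β lam z) lam := by
  unfold Qpart Qd qfun
  exact HasDerivAt.fun_sum fun a _ =>
    hasDerivAt_expterm (w1 z * r z a) (w2 z * c z a) β lam

lemma hasDerivAt_Qd {Z : Type*} (r c : Z → Bool → ℝ) (w1 w2 : Z → ℝ)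
    (β lam : ℝ) (z : Z) :
    HasDerivAt (fun l => Qd r c w1 w2 β l z) (Qdd r c w1 w2 β lam z) lam := by
  unfold Qd Qdd qfun
  refine HasDerivAt.fun_sum fun a _ => ?_
  have := (hasDerivAt_expterm (w1 z * r z a) (w2 z * c z a) β lam).const_mul
    (-(w2 z * c z a) / β)
  refine this.congr_deriv ?_
  ring

noncomputable def D1 {Z : Type*} [Fintype Z] (ρ : Z → ℝ)
    (r c : Z → Bool → ℝ) (w1 w2 : Z → ℝ) (β C lam : ℝ) : ℝ :=
  β * ∑ z, ρ z * (Qd r c w1 w2 β lam z / Qpart r c w1 w2 β lam z) + C + β * lam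

lemma hasDerivAt_dualFun {Z : Type*} [Fintype Z] (ρ : Z → ℝ)
    (r c : Z → Bool → ℝ) (w1 w2 : Z → ℝ) (β C lam : ℝ) :
    HasDerivAt (fun l => dualFun ρ r c w1 w2 β C l)
      (D1 ρ r c w1 w2 β C lam) lam := by
  unfold dualFun D1
  have h1 : HasDerivAt
      (fun l => ∑ z, ρ z * Real.log (Qpart r c w1 w2 β l z))
      (∑ z, ρ z * (Qd r c w1 w2 β lam z / Qpart r c w1 w2 β lam z)) lam := by
    refine HasDerivAt.fun_sum fun z _ => ?_
    exact ((hasDerivAt_Qpart r c w1 w2 β lam z).log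
      (Qpart_pos r c w1 w2 β lam z).ne').const_mul (ρ z)
  have h2 : HasDerivAt (fun l : ℝ => l * C) C lam := by
    simpa using (hasDerivAt_id lam).mul_const C
  have h3 : HasDerivAt (fun l : ℝ => β * l ^ 2 / 2) (β * lam) lam := by
    have := ((hasDerivAt_pow 2 lam).const_mul β).div_const 2
    refine this.congr_deriv ?_
    norm_num
    ring
  exact ((h1.const_mul β).add h2).add h3

/-- the dual function `d` is twice differentiable on `ℝ`, and
`d″(λ) = β + (1/β) ∑_z ρ(z) w2(z)² Var_{π_λ(·|z)}(c(z,·))`. -/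
theorem dual_second_deriv {Z : Type*} [Fintype Z] [Nonempty Z]
    (ρ : Z → ℝ) (hρ_pos : ∀ z, 0 < ρ z) (hρ_sum : ∑ z, ρ z = 1)
    (r c : Z → Bool → ℝ) (w1 w2 : Z → ℝ)
    (hw1 : ∀ z, 0 ≤ w1 z) (hw2 : ∀ z, 0 ≤ w2 z)
    (β : ℝ) (hβ : 0 < β) (C : ℝ) :
    Differentiable ℝ (fun l => dualFun ρ r c w1 w2 β C l) ∧
    ∀ lam : ℝ,
      HasDerivAt (deriv (fun l => dualFun ρ r c w1 w2 β C l))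
        (β + 1 / β * ∑ z, ρ z * w2 z ^ 2 *
          varBool (gibbs r c w1 w2 β lam z) (c z))
        lam := by
  refine ⟨fun l => (hasDerivAt_dualFun ρ r c w1 w2 β C l).differentiableAt, fun lam => ?_⟩
  have hderiv : deriv (fun l => dualFun ρ r c w1 w2 β C l)
      = fun l => D1 ρ r c w1 w2 β C l :=
    funext fun l => (hasDerivAt_dualFun ρ r c w1 w2 β C l).deriv
  rw [hderiv]
  unfold D1
  have h1 : HasDerivAt
      (fun l => ∑ z, ρ z * (Qd r c w1 w2 β l z / Qpart r c w1 w2 β l z))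
      (∑ z, ρ z * ((Qdd r c w1 w2 β lam z * Qpart r c w1 w2 β lam z
        - Qd r c w1 w2 β lam z * Qd r c w1 w2 β lam z)
        / Qpart r c w1 w2 β lam z ^ 2)) lam := by
    refine HasDerivAt.fun_sum fun z _ => ?_
    exact ((hasDerivAt_Qd r c w1 w2 β lam z).div
      (hasDerivAt_Qpart r c w1 w2 β lam z)
      (Qpart_pos r c w1 w2 β lam z).ne').const_mul (ρ z)
  have h2 : HasDerivAt (fun l : ℝ => β * l) β lam := by
    simpa using (hasDerivAt_id lam).const_mul β
  have h := ((h1.const_mul β).add (hasDerivAt_const lam C)).add h2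
  refine h.congr_deriv (Eq.symm ?_)
  rw [add_zero]
  have key : ∀ z : Z,
      ρ z * w2 z ^ 2 * varBool (gibbs r c w1 w2 β lam z) (c z) * (1 / β)
      = β * (ρ z * ((Qdd r c w1 w2 β lam z * Qpart r c w1 w2 β lam z
        - Qd r c w1 w2 β lam z * Qd r c w1 w2 β lam z)
        / Qpart r c w1 w2 β lam z ^ 2)) := by
    intro z
    have hQ := (Qpart_pos r c w1 w2 β lam z).ne'
    have hQ' : Real.exp (qfun r c w1 w2 lam z true / β)
        + Real.exp (qfun r c w1 w2 lam z false / β) ≠ 0 := by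
      simpa [Qpart, Fintype.sum_bool] using hQ
    unfold varBool gibbs Qd Qdd
    simp only [Fintype.sum_bool]
    field_simp
    ring
  calc β + 1 / β * ∑ z, ρ z * w2 z ^ 2 * varBool (gibbs r c w1 w2 β lam z) (c z)
      = (∑ z, ρ z * w2 z ^ 2 * varBool (gibbs r c w1 w2 β lam z) (c z)) * (1/β) + β := by
        ring
    _ = (∑ z, β * (ρ z * ((Qdd r c w1 w2 β lam z * Qpart r c w1 w2 β lam z
        - Qd r c w1 w2 β lam z * Qd r c w1 w2 β lam z)
        / Qpart r c w1 w2 β lam z ^ 2))) + β := by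
        rw [Finset.sum_mul]
        exact congrArg (· + β) (Finset.sum_congr rfl fun z _ => key z)
    _ = _ := by rw [← Finset.mul_sum]
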